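/- arXiv:2306.08437 — 3 statements merged into one kernel-verified Lean document; each statement's English description precedes it below -/
import Mathlib

section
/- Let Ω ⊆ ℂ be open and f : Ω → ℂ a continuous function of class C¹ satisfying the asymptotic mean value formula f(z) = (1/|D_r(z)|) ∫_{D_r(z)} f(ζ)[1 + (2/r)(ζ − z)] dA_ζ + o(r) as r → 0⁺ at every z ∈ Ω. Then f is holomorphic in Ω. -/
open MeasureTheory Metric Complex Filter Set

private lemma rot_int (a : Circle) (r : ℝ) (g : ℂ → ℂ) :
    ∫ w in ball (0:ℂ) r, g ((a:ℂ) * w) = ∫ w in ball (0:ℂ) r, g w := by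
  have hmp : MeasurePreserving (rotation a) volume volume :=
    (rotation a).measurePreserving
  have hemb : MeasurableEmbedding (rotation a) :=
    (rotation a).toHomeomorph.measurableEmbedding
  have h := hmp.setIntegral_preimage_emb hemb g (ball 0 r)
  have hpre : (rotation a) ⁻¹' (ball (0:ℂ) r) = ball 0 r := by
    rw [(rotation a).preimage_ball, map_zero]
  rw [hpre] at h
  simpa [rotation_apply] using h

private def cI : Circle := ⟨Complex.I, by simp [Submonoid.unitSphere, Complex.norm_I]⟩

private lemma cI_coe : (cI : ℂ) = Complex.I := rfl

private lemma int_id (r : ℝ) : ∫ w in ball (0:ℂ) r, w = 0 := by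
  have h := rot_int cI r id
  simp only [cI_coe, id] at h
  rw [integral_const_mul] at h
  have : (Complex.I - 1) * ∫ w in ball (0:ℂ) r, w = 0 := by
    rw [sub_mul, h]; ring
  have hne : (Complex.I - 1) ≠ 0 := by
    simp [Complex.ext_iff]
  exact (mul_eq_zero.mp this).resolve_left hne

private lemma int_sq (r : ℝ) : ∫ w in ball (0:ℂ) r, w ^ 2 = 0 := by
  have h := rot_int cI r (· ^ 2)
  simp only [cI_coe, mul_pow, Complex.I_sq, neg_one_mul] at h
  rw [integral_neg] at h
  have : (2:ℂ) * ∫ w in ball (0:ℂ) r, w ^ 2 = 0 := by linear_combination -h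
  simpa using this

private lemma int_conj (r : ℝ) : ∫ w in ball (0:ℂ) r, (starRingEnd ℂ) w = 0 := by
  rw [integral_conj, int_id, map_zero]

private lemma int_norm_sq (r : ℝ) (hr : 0 < r) :
    ∫ w in ball (0:ℂ) r, ‖w‖^2 = Real.pi * r^4 / 2 := by
  have key := integral_fun_norm_addHaar (volume : Measure ℂ)
    ((Set.Iio r).indicator (fun y : ℝ => y^2))
  have h1 : (fun x : ℂ => (Set.Iio r).indicator (fun y : ℝ => y^2) ‖x‖)
      = (ball (0:ℂ) r).indicator (fun x => ‖x‖^2) := by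
    ext x
    by_cases h : ‖x‖ < r <;>
      simp [Set.indicator, h, mem_ball, dist_zero_right]
  rw [h1, integral_indicator measurableSet_ball] at key
  have h2 : (fun y : ℝ => y ^ (Module.finrank ℝ ℂ - 1) •
      (Set.Iio r).indicator (fun y : ℝ => y^2) y)
      = (Set.Iio r).indicator (fun y : ℝ => y^3) := by
    ext y
    by_cases h : y < r <;>
      simp [Set.indicator, h, Complex.finrank_real_complex] <;> ring
  rw [h2, integral_indicator measurableSet_Iio, Measure.restrict_restrict measurableSet_Iio,
    Set.Iio_inter_Ioi, ← integral_Ioc_eq_integral_Ioo,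
    ← intervalIntegral.integral_of_le hr.le, integral_pow] at key
  rw [key]
  simp [Complex.finrank_real_complex, Complex.volume_ball, Measure.real,
    ENNReal.toReal_mul, ENNReal.toReal_ofReal hr.le]
  ring

private lemma int_translate (z : ℂ) (r : ℝ) (g : ℂ → ℂ) :
    ∫ ζ in ball z r, g (ζ - z) = ∫ w in ball (0:ℂ) r, g w := by
  have hmp : MeasurePreserving (fun w : ℂ => w - z) volume volume :=
    measurePreserving_sub_right volume z
  have hemb : MeasurableEmbedding (fun w : ℂ => w - z) :=
    (MeasurableEquiv.subRight z).measurableEmbedding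
  have h := hmp.setIntegral_preimage_emb hemb g (ball 0 r)
  have hpre : (fun w : ℂ => w - z) ⁻¹' (ball (0:ℂ) r) = ball z r := by
    ext w
    simp [mem_ball, dist_eq_norm]
  rwa [hpre] at h

private lemma cont_intOn {g : ℂ → ℂ} (hg : Continuous g) (z : ℂ) (r : ℝ) :
    IntegrableOn g (ball z r) volume :=
  (hg.continuousOn.integrableOn_compact (isCompact_closedBall z r)).mono_set
    ball_subset_closedBall

private lemma vol_ball (z : ℂ) (r : ℝ) (hr : 0 ≤ r) :
    (volume (ball z r)).toReal = Real.pi * r^2 := by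
  simp [Complex.volume_ball, ENNReal.toReal_mul, ENNReal.toReal_ofReal hr]
  ring

private lemma int_mul_conj (r : ℝ) (hr : 0 < r) :
    ∫ w in ball (0:ℂ) r, (starRingEnd ℂ) w * w = ((Real.pi * r^4 / 2 : ℝ) : ℂ) := by
  have h1 : ∀ w : ℂ, (starRingEnd ℂ) w * w = ((‖w‖^2 : ℝ) : ℂ) := by
    intro w
    rw [mul_comm, Complex.mul_conj]
    norm_cast
    rw [← Complex.sq_norm]
  simp_rw [h1]
  rw [← int_norm_sq r hr]
  exact _root_.integral_ofReal (𝕜 := ℂ)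

private lemma int_poly (r : ℝ) (hr : 0 < r) (p q s c : ℂ) :
    ∫ w in ball (0:ℂ) r, (p + q*w + s*(starRingEnd ℂ) w) * (1 + c*w)
      = (Real.pi * r^2 : ℝ) • p + ((Real.pi * r^4/2 : ℝ) : ℂ) * (s * c) := by
  have hexp : ∀ w : ℂ, (p + q*w + s*(starRingEnd ℂ) w) * (1 + c*w)
      = p + ((p*c+q)*w + ((q*c)*w^2 + (s*(starRingEnd ℂ) w + (s*c)*((starRingEnd ℂ) w * w)))) := by
    intro w; ring
  simp_rw [hexp]
  have i1 : IntegrableOn (fun w : ℂ => (p*c+q)*w) (ball (0:ℂ) r) volume :=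
    cont_intOn (by fun_prop) _ _
  have i2 : IntegrableOn (fun w : ℂ => (q*c)*w^2) (ball (0:ℂ) r) volume :=
    cont_intOn (by fun_prop) _ _
  have i3 : IntegrableOn (fun w : ℂ => s*(starRingEnd ℂ) w) (ball (0:ℂ) r) volume :=
    cont_intOn (continuous_const.mul Complex.continuous_conj) _ _
  have i4 : IntegrableOn (fun w : ℂ => (s*c)*((starRingEnd ℂ) w * w)) (ball (0:ℂ) r) volume :=
    cont_intOn (continuous_const.mul (Complex.continuous_conj.mul continuous_id)) _ _
  have I234 : Integrable (fun w : ℂ => (p*c+q)*w + ((q*c)*w^2 + (s*(starRingEnd ℂ) w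
      + (s*c)*((starRingEnd ℂ) w * w)))) (volume.restrict (ball 0 r)) :=
    i1.add (i2.add (i3.add i4))
  have I34 : Integrable (fun w : ℂ => (q*c)*w^2 + (s*(starRingEnd ℂ) w
      + (s*c)*((starRingEnd ℂ) w * w))) (volume.restrict (ball 0 r)) :=
    i2.add (i3.add i4)
  have I4 : Integrable (fun w : ℂ => s*(starRingEnd ℂ) w + (s*c)*((starRingEnd ℂ) w * w))
      (volume.restrict (ball 0 r)) :=
    i3.add i4
  rw [integral_add (integrableOn_const (C := p) measure_ball_lt_top.ne) I234,
    integral_add i1 I34, integral_add i2 I4, integral_add i3 i4]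
  rw [setIntegral_const, integral_const_mul, integral_const_mul, integral_const_mul,
    integral_const_mul, int_id, int_sq, int_conj, int_mul_conj r hr, measureReal_def, vol_ball _ _ hr.le]
  ring

private lemma alg_key (p r u v e fz : ℂ) (hp : p ≠ 0) (hr : r ≠ 0) :
    r⁻¹ * (fz - (p * r ^ 2)⁻¹ * (p * r^2 * fz + (p * r^4/2) * (((u + Complex.I*v)/2) * (2/r)) + e))
      = -((u + Complex.I*v)/2) - (p * r ^ 3)⁻¹ * e := by
  have h1 : (p * r ^ 2)⁻¹ * (p * r^2 * fz + (p * r^4/2) * (((u + Complex.I*v)/2) * (2/r)) + e)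
      = fz + r * ((u + Complex.I*v)/2) + (p * r ^ 2)⁻¹ * e := by
    rw [mul_add, mul_add, inv_mul_cancel_left₀ (by simp [hp, hr] : p * r^2 ≠ 0)]
    congr 1
    congr 1
    field_simp
  rw [h1]
  have h2 : fz - (fz + r * ((u + Complex.I*v)/2) + (p * r ^ 2)⁻¹ * e)
      = -(r * ((u + Complex.I*v)/2)) - (p * r ^ 2)⁻¹ * e := by ring
  rw [h2, mul_sub]
  congr 1
  · field_simp
  · rw [← mul_assoc]
    congr 1
    rw [← mul_inv]
    congr 1
    ring

/-- A `C¹` function satisfying the asymptotic weighted mean value formula at every point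
of an open set `Ω` is holomorphic in `Ω`. -/
theorem asymptotic_weighted_mvp_implies_holomorphic (Ω : Set ℂ) (hΩ : IsOpen Ω) (f : ℂ → ℂ)
    (hcont : ContinuousOn f Ω) (hf : ContDiffOn ℝ 1 f Ω)
    (hmvp : ∀ z ∈ Ω,
      Filter.Tendsto
        (fun r : ℝ => r⁻¹ •
          (f z - (Real.pi * r ^ 2)⁻¹ •
            ∫ ζ in ball z r, f ζ * (1 + (2 / (r : ℂ)) * (ζ - z))))
        (nhdsWithin 0 (Set.Ioi 0)) (nhds 0)) :
    DifferentiableOn ℂ f Ω := by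
  suffices H : ∀ z ∈ Ω, DifferentiableAt ℂ f z by
    exact fun z hz => (H z hz).differentiableWithinAt
  intro z hz
  have hdiff : DifferentiableAt ℝ f z :=
    ((hf.differentiableOn one_ne_zero) z hz).differentiableAt (hΩ.mem_nhds hz)
  set L := fderiv ℝ f z with hLdef
  have hL : HasFDerivAt f L z := hdiff.hasFDerivAt
  set b : ℂ := (L 1 + Complex.I * L Complex.I) / 2 with hbdef
  set a : ℂ := (L 1 - Complex.I * L Complex.I) / 2 with hadef
  have hLw : ∀ w : ℂ, L w = a * w + b * (starRingEnd ℂ) w := by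
    intro w
    have hw : w = w.re • (1:ℂ) + w.im • Complex.I := by
      simp only [Complex.real_smul, smul_eq_mul, mul_one]
      exact (Complex.re_add_im w).symm
    conv_lhs => rw [hw]
    rw [map_add, _root_.map_smul, _root_.map_smul]
    have h1 : ((starRingEnd ℂ) w) = (w.re : ℂ) - w.im * Complex.I := by
      simp [Complex.ext_iff]
    have h2 : w = (w.re : ℂ) + w.im * Complex.I := (Complex.re_add_im w).symm
    rw [h1]
    simp only [Complex.real_smul, smul_eq_mul, hadef, hbdef]
    linear_combination ((L 1 - Complex.I * L Complex.I)/2 + L Complex.I * Complex.I - L 1) * h2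
      + ((w.im:ℂ) * (L Complex.I)) * Complex.I_mul_I
  set E : ℂ → ℂ := fun ζ => f ζ - f z - L (ζ - z) with hEdef
  have hEo : (fun ζ => E ζ) =o[nhds z] (fun ζ => ζ - z) :=
    hL.isLittleO
  obtain ⟨δ₀, hδ₀pos, hδ₀⟩ : ∃ δ > 0, closedBall z δ ⊆ Ω :=
    Metric.nhds_basis_closedBall.mem_iff.mp (hΩ.mem_nhds hz)
  set err : ℝ → ℂ := fun r => ∫ ζ in ball z r, E ζ * (1 + (2/(r:ℂ)) * (ζ - z)) with herrdef
  have hEcont : ContinuousOn E (closedBall z δ₀) := by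
    apply ContinuousOn.sub
    · exact (hcont.mono hδ₀).sub continuousOn_const
    · exact (L.continuous.comp (continuous_id.sub continuous_const)).continuousOn
  have hEint : ∀ r : ℝ, 0 < r → r ≤ δ₀ →
      IntegrableOn (fun ζ => E ζ * (1 + (2/(r:ℂ)) * (ζ - z))) (ball z r) volume := by
    intro r hr hrδ
    have hc : ContinuousOn (fun ζ => E ζ * (1 + (2/(r:ℂ)) * (ζ - z))) (closedBall z r) := by
      apply ContinuousOn.mul
      · exact hEcont.mono (closedBall_subset_closedBall hrδ)
      · exact (continuous_const.add (continuous_const.mul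
          (continuous_id.sub continuous_const))).continuousOn
    exact (hc.integrableOn_compact (isCompact_closedBall z r)).mono_set ball_subset_closedBall
  have hkey : ∀ r : ℝ, 0 < r → r ≤ δ₀ →
      r⁻¹ • (f z - (Real.pi * r ^ 2)⁻¹ •
          ∫ ζ in ball z r, f ζ * (1 + (2 / (r:ℂ)) * (ζ - z)))
        = -b - (Real.pi * r ^ 3)⁻¹ • err r := by
    intro r hr hrδ
    have hsplit : ∀ ζ : ℂ, f ζ * (1 + (2/(r:ℂ))*(ζ-z))
        = (f z + a*(ζ-z) + b*(starRingEnd ℂ) (ζ-z)) * (1 + (2/(r:ℂ))*(ζ-z))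
          + E ζ * (1 + (2/(r:ℂ))*(ζ-z)) := by
      intro ζ
      have hfζ : f ζ = f z + L (ζ - z) + E ζ := by
        simp only [hEdef]; ring
      rw [hfζ, hLw (ζ - z)]; ring
    have hint1 : IntegrableOn (fun ζ : ℂ =>
        (f z + a*(ζ-z) + b*(starRingEnd ℂ) (ζ-z)) * (1 + (2/(r:ℂ))*(ζ-z))) (ball z r) volume := by
      apply cont_intOn
      apply Continuous.mul
      · exact (continuous_const.add (continuous_const.mul
          (continuous_id.sub continuous_const))).add
          (continuous_const.mul (Complex.continuous_conj.comp
            (continuous_id.sub continuous_const)))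
      · exact continuous_const.add (continuous_const.mul (continuous_id.sub continuous_const))
    have htr := int_translate z r
      (fun w => (f z + a*w + b*(starRingEnd ℂ) w) * (1 + (2/(r:ℂ))*w))
    have hT : (∫ ζ in ball z r, f ζ * (1 + (2 / (r:ℂ)) * (ζ - z)))
        = ((Real.pi * r^2 : ℝ) • f z + ((Real.pi * r^4/2 : ℝ) : ℂ) * (b * (2/(r:ℂ)))) + err r := by
      simp_rw [hsplit]
      rw [integral_add hint1 (hEint r hr hrδ), htr, int_poly r hr (f z) a b (2/(r:ℂ))]
    rw [hT]
    have hrne : (r : ℝ) ≠ 0 := hr.ne'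
    have hrC : ((r : ℝ) : ℂ) ≠ 0 := Complex.ofReal_ne_zero.mpr hrne
    have hπC : ((Real.pi : ℝ) : ℂ) ≠ 0 := Complex.ofReal_ne_zero.mpr Real.pi_ne_zero
    simp only [Complex.real_smul, Complex.ofReal_inv, Complex.ofReal_mul, Complex.ofReal_pow,
      Complex.ofReal_div, Complex.ofReal_ofNat]
    rw [hbdef]
    linear_combination alg_key (Real.pi : ℂ) ((r : ℝ) : ℂ) (L 1) (L Complex.I) (err r) (f z)
      hπC hrC
  have herrlim : Tendsto (fun r : ℝ => (Real.pi * r ^ 3)⁻¹ • err r)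
      (nhdsWithin 0 (Set.Ioi 0)) (nhds 0) := by
    rw [NormedAddCommGroup.tendsto_nhds_zero]
    intro ε hε
    have hε4 : 0 < ε/4 := by linarith
    obtain ⟨δ₁, hδ₁pos, hδ₁⟩ := Metric.eventually_nhds_iff.mp (hEo.def hε4)
    filter_upwards [Ioc_mem_nhdsGT (lt_min hδ₀pos hδ₁pos)] with r hrm
    have hr : 0 < r := hrm.1
    have hrδ₀ : r ≤ δ₀ := le_trans hrm.2 (min_le_left _ _)
    have hrδ₁ : r ≤ δ₁ := le_trans hrm.2 (min_le_right _ _)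
    have hbound : ∀ ζ ∈ ball z r, ‖E ζ * (1 + (2/(r:ℂ)) * (ζ - z))‖ ≤ (ε/4) * r * 3 := by
      intro ζ hζ
      have hd : ‖ζ - z‖ < r := by rwa [mem_ball, dist_eq_norm] at hζ
      have h1 : ‖E ζ‖ ≤ ε/4 * ‖ζ - z‖ := by
        have := hδ₁ (y := ζ) (by rw [dist_eq_norm]; exact hd.trans_le hrδ₁)
        simpa using this
      have hnorm2r : ‖(2/(r:ℂ))‖ = 2/r := by
        rw [norm_div]
        simp [Complex.norm_real, abs_of_pos hr]
      have h2 : ‖(1 : ℂ) + (2/(r:ℂ)) * (ζ - z)‖ ≤ 3 := by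
        calc ‖(1:ℂ) + (2/(r:ℂ))*(ζ-z)‖ ≤ ‖(1:ℂ)‖ + ‖(2/(r:ℂ))*(ζ-z)‖ := norm_add_le _ _
          _ = 1 + (2/r) * ‖ζ - z‖ := by rw [norm_one, norm_mul, hnorm2r]
          _ ≤ 1 + (2/r) * r := by
              have : (2/r) * ‖ζ - z‖ ≤ (2/r) * r :=
                mul_le_mul_of_nonneg_left hd.le (by positivity)
              linarith
          _ = 3 := by field_simp; norm_num
      calc ‖E ζ * (1 + (2/(r:ℂ)) * (ζ - z))‖ = ‖E ζ‖ * ‖1 + (2/(r:ℂ)) * (ζ - z)‖ :=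
            norm_mul _ _
        _ ≤ (ε/4 * ‖ζ - z‖) * 3 := mul_le_mul h1 h2 (norm_nonneg _) (by positivity)
        _ ≤ (ε/4) * r * 3 := by nlinarith [hd.le, norm_nonneg (ζ - z)]
    have hnorm : ‖err r‖ ≤ ((ε/4) * r * 3) * (volume (ball z r)).toReal :=
      norm_setIntegral_le_of_norm_le_const measure_ball_lt_top hbound
    rw [norm_smul]
    have hv : (volume (ball z r)).toReal = Real.pi * r^2 := vol_ball z r hr.le
    have hpos : (0:ℝ) < Real.pi * r^3 := by positivity
    have hfin : ‖(Real.pi * r^3)⁻¹‖ * ‖err r‖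
        ≤ (Real.pi * r^3)⁻¹ * ((ε/4) * r * 3 * (Real.pi * r^2)) := by
      rw [Real.norm_eq_abs, abs_of_pos (inv_pos.mpr hpos)]
      apply mul_le_mul_of_nonneg_left _ (inv_pos.mpr hpos).le
      rw [← hv]; exact hnorm
    have heval : (Real.pi * r^3)⁻¹ * ((ε/4) * r * 3 * (Real.pi * r^2)) = 3*ε/4 := by
      field_simp
    calc ‖(Real.pi * r^3)⁻¹‖ * ‖err r‖ ≤ 3*ε/4 := by rw [← heval]; exact hfin
      _ < ε := by linarith
  have hgtends : Tendsto (fun r : ℝ => -b - (Real.pi * r ^ 3)⁻¹ • err r)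
      (nhdsWithin 0 (Set.Ioi 0)) (nhds (-b)) := by
    have h := tendsto_const_nhds (x := -b) (f := nhdsWithin (0:ℝ) (Set.Ioi 0)) |>.sub herrlim
    simpa using h
  have heq : (fun r : ℝ => r⁻¹ • (f z - (Real.pi * r ^ 2)⁻¹ •
        ∫ ζ in ball z r, f ζ * (1 + (2 / (r:ℂ)) * (ζ - z))))
      =ᶠ[nhdsWithin 0 (Set.Ioi 0)]
      (fun r : ℝ => -b - (Real.pi * r ^ 3)⁻¹ • err r) := by
    filter_upwards [Ioc_mem_nhdsGT hδ₀pos] with r hrm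
    exact hkey r hrm.1 hrm.2
  have h0 : (0 : ℂ) = -b := tendsto_nhds_unique (hmvp z hz) (hgtends.congr' heq.symm)
  have hb0 : b = 0 := by
    have := h0.symm
    simpa [neg_eq_zero] using this
  have hI : Complex.I * L Complex.I = -L 1 := by
    rw [hbdef] at hb0
    field_simp at hb0
    linear_combination hb0
  have ha1 : a = L 1 := by
    rw [hadef, hI]; ring
  have hall : ∀ w, L w = L 1 * w := by
    intro w
    rw [hLw w, hb0, ha1]; ring
  set L' : ℂ →L[ℂ] ℂ := (L 1) • (ContinuousLinearMap.id ℂ ℂ) with hL'def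
  have hres : L'.restrictScalars ℝ = L := by
    apply ContinuousLinearMap.ext
    intro w
    rw [hall w]
    simp [hL'def, smul_eq_mul]
  exact (hasFDerivAt_of_restrictScalars ℝ hL hres).differentiableAt
end

section
/- Let z₁, z₂ ∈ ℂ and r > 0. Then the area of the symmetric difference of the disks D_r(z₁) and D_r(z₂) satisfies |D_r(z₁) △ D_r(z₂)| ≤ 4r·|z₁ − z₂|. -/
open MeasureTheory Metric

/-- The symmetric difference of an interval and its translate has measure at most `2 d`. -/
lemma symmDiff_Ioo_volume (a b d : ℝ) (hd : 0 ≤ d) :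
    volume (symmDiff (Set.Ioo a b) (Set.Ioo (a + d) (b + d))) ≤ ENNReal.ofReal (2 * d) := by
  have hsub : symmDiff (Set.Ioo a b) (Set.Ioo (a + d) (b + d)) ⊆
      Set.Ioc a (a + d) ∪ Set.Ico b (b + d) := by
    intro x hx
    rcases Set.mem_symmDiff.1 hx with ⟨⟨h1, h2⟩, h3⟩ | ⟨⟨h1, h2⟩, h3⟩
    · left
      refine ⟨h1, ?_⟩
      by_contra hgt
      push_neg at hgt
      exact h3 ⟨hgt, lt_of_lt_of_le h2 (by linarith)⟩
    · right
      refine ⟨?_, h2⟩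
      by_contra hgt
      push_neg at hgt
      exact h3 ⟨lt_of_le_of_lt (by linarith) h1, hgt⟩
  calc volume (symmDiff (Set.Ioo a b) (Set.Ioo (a + d) (b + d)))
      ≤ volume (Set.Ioc a (a + d) ∪ Set.Ico b (b + d)) := measure_mono hsub
    _ ≤ volume (Set.Ioc a (a + d)) + volume (Set.Ico b (b + d)) := measure_union_le _ _
    _ = ENNReal.ofReal d + ENNReal.ofReal d := by
        rw [Real.volume_Ioc, Real.volume_Ico]
        simp
    _ = ENNReal.ofReal (2 * d) := by
        rw [← ENNReal.ofReal_add hd hd]; ring_nf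

lemma sq_section (x r : ℝ) :
    {y : ℝ | x ^ 2 + y ^ 2 < r ^ 2} =
      Set.Ioo (-Real.sqrt (r ^ 2 - x ^ 2)) (Real.sqrt (r ^ 2 - x ^ 2)) := by
  ext y
  simp only [Set.mem_setOf_eq, Set.mem_Ioo, ← abs_lt]
  rw [Real.lt_sqrt (abs_nonneg y), sq_abs]
  constructor <;> intro h <;> linarith

/-- The standard case: centers `0` and `d * I`. -/
lemma symmDiff_balls_std (r d : ℝ) (hr : 0 < r) (hd : 0 ≤ d) :
    volume (symmDiff (ball (0 : ℂ) r) (ball (d * Complex.I) r)) ≤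
      ENNReal.ofReal (4 * r * d) := by
  set e := Complex.measurableEquivRealProd
  set T₁ : Set (ℝ × ℝ) := {p | p.1 ^ 2 + p.2 ^ 2 < r ^ 2} with hT₁
  set T₂ : Set (ℝ × ℝ) := {p | p.1 ^ 2 + (p.2 - d) ^ 2 < r ^ 2} with hT₂
  have hT₁open : IsOpen T₁ := by
    apply isOpen_lt (by fun_prop) continuous_const
  have hT₂open : IsOpen T₂ := by
    apply isOpen_lt (by fun_prop) continuous_const
  have hTm : MeasurableSet (symmDiff T₁ T₂) :=
    hT₁open.measurableSet.symmDiff hT₂open.measurableSet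
  have hb₁ : ball (0 : ℂ) r = e ⁻¹' T₁ := by
    ext z
    simp only [mem_ball, Set.mem_preimage, hT₁, Set.mem_setOf_eq, e,
      Complex.measurableEquivRealProd_apply, Complex.dist_eq, sub_zero]
    rw [Complex.norm_def, Complex.normSq_apply]
    rw [Real.sqrt_lt' hr]
    constructor <;> intro h <;> nlinarith
  have hb₂ : ball (d * Complex.I) r = e ⁻¹' T₂ := by
    ext z
    simp only [mem_ball, Set.mem_preimage, hT₂, Set.mem_setOf_eq, e,
      Complex.measurableEquivRealProd_apply, Complex.dist_eq]
    have hre : (z - d * Complex.I).re = z.re := by simp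
    have him : (z - d * Complex.I).im = z.im - d := by simp
    rw [Complex.norm_def, Complex.normSq_apply, hre, him]
    rw [Real.sqrt_lt' hr]
    constructor <;> intro h <;> nlinarith
  rw [hb₁, hb₂, ← Set.preimage_symmDiff,
    Complex.volume_preserving_equiv_real_prod.measure_preimage hTm.nullMeasurableSet]
  rw [Measure.volume_eq_prod, Measure.prod_apply hTm]
  have hsection : ∀ x : ℝ, (Prod.mk x ⁻¹' symmDiff T₁ T₂) =
      symmDiff (Set.Ioo (-Real.sqrt (r ^ 2 - x ^ 2)) (Real.sqrt (r ^ 2 - x ^ 2)))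
        (Set.Ioo (-Real.sqrt (r ^ 2 - x ^ 2) + d) (Real.sqrt (r ^ 2 - x ^ 2) + d)) := by
    intro x
    rw [Set.preimage_symmDiff]
    congr 1
    · have : (Prod.mk x ⁻¹' T₁) = {y : ℝ | x ^ 2 + y ^ 2 < r ^ 2} := rfl
      rw [this, sq_section]
    · have : (Prod.mk x ⁻¹' T₂) = {y : ℝ | x ^ 2 + (y - d) ^ 2 < r ^ 2} := rfl
      rw [this]
      ext y
      simp only [Set.mem_setOf_eq, Set.mem_Ioo]
      have := Set.ext_iff.1 (sq_section x r) (y - d)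
      simp only [Set.mem_setOf_eq, Set.mem_Ioo] at this
      rw [this]
      constructor <;> intro h <;> constructor <;> linarith [h.1, h.2]
  have hbound : ∀ x : ℝ, volume (Prod.mk x ⁻¹' symmDiff T₁ T₂) ≤
      Set.indicator (Set.Ioo (-r) r) (fun _ => ENNReal.ofReal (2 * d)) x := by
    intro x
    rw [hsection x]
    by_cases hx : x ∈ Set.Ioo (-r) r
    · rw [Set.indicator_of_mem hx]
      exact symmDiff_Ioo_volume _ _ _ hd
    · rw [Set.indicator_of_notMem hx]
      have hx2 : r ^ 2 - x ^ 2 ≤ 0 := by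
        simp only [Set.mem_Ioo, not_and_or, not_lt] at hx
        rcases hx with h | h <;> nlinarith [hr.le]
      have hs : Real.sqrt (r ^ 2 - x ^ 2) = 0 := Real.sqrt_eq_zero_of_nonpos hx2
      rw [hs]
      simp [symmDiff_self]
  calc ∫⁻ x, volume (Prod.mk x ⁻¹' symmDiff T₁ T₂)
      ≤ ∫⁻ x, Set.indicator (Set.Ioo (-r) r) (fun _ => ENNReal.ofReal (2 * d)) x :=
        lintegral_mono hbound
    _ = ENNReal.ofReal (2 * d) * volume (Set.Ioo (-r) r) := by
        rw [lintegral_indicator measurableSet_Ioo]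
        simp [mul_comm]
    _ ≤ ENNReal.ofReal (4 * r * d) := by
        rw [Real.volume_Ioo, ← ENNReal.ofReal_mul (by positivity)]
        apply ENNReal.ofReal_le_ofReal
        apply le_of_eq
        ring

/-- The area of the symmetric difference of two disks of equal radius `r` is at most
`4 r` times the distance between the centers. -/
theorem symmDiff_balls_area_bound (z₁ z₂ : ℂ) (r : ℝ) (hr : 0 < r) :
    volume (symmDiff (ball z₁ r) (ball z₂ r)) ≤ ENNReal.ofReal (4 * r * dist z₁ z₂) := by
  by_cases hz : z₁ = z₂
  · subst hz
    simp [symmDiff_self]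
  set d : ℝ := dist z₁ z₂ with hd
  have hd0 : 0 < d := dist_pos.2 hz
  set w : ℂ := z₂ - z₁ with hw
  have hw0 : w ≠ 0 := sub_ne_zero.2 (Ne.symm hz)
  have habsw : ‖w‖ = d := by
    rw [hw, hd, dist_comm, Complex.dist_eq]
  set c : ℂ := (d * Complex.I) / w with hc
  have hcabs : ‖c‖ = 1 := by
    rw [hc, norm_div, habsw]
    simp [abs_of_pos hd0]
    exact hd0.ne'
  set u : Circle := ⟨c, by
    show c ∈ Metric.sphere (0 : ℂ) 1
    rw [mem_sphere_zero_iff_norm]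
    exact hcabs⟩ with hu
  set e : ℂ ≃ₗᵢ[ℝ] ℂ := rotation u with he
  -- the map f z = e (-z₁ + z) sends z₁ ↦ 0, z₂ ↦ d * I
  have habsdI : ‖(d : ℂ) * Complex.I‖ = d := by
    simp [abs_of_pos hd0]
  have key : symmDiff (ball z₁ r) (ball z₂ r) =
      (fun z : ℂ => -z₁ + z) ⁻¹' (e ⁻¹' symmDiff (ball (0 : ℂ) r) (ball (d * Complex.I) r)) := by
    rw [← Set.preimage_comp, Set.preimage_symmDiff]
    congr 1
    · ext z
      simp only [Set.mem_preimage, Function.comp_apply, mem_ball, he, rotation_apply,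
        Complex.dist_eq, sub_zero]
      have h1 : (u : ℂ) * (-z₁ + z) = c * (z - z₁) := by rw [hu]; ring
      rw [h1, norm_mul, hcabs, one_mul]
    · ext z
      simp only [Set.mem_preimage, Function.comp_apply, mem_ball, he, rotation_apply,
        Complex.dist_eq]
      have h1 : (u : ℂ) * (-z₁ + z) - d * Complex.I = c * (z - z₂) := by
        rw [hu]
        show c * (-z₁ + z) - d * Complex.I = c * (z - z₂)
        rw [hc]
        field_simp
        ring
      rw [h1, norm_mul, hcabs, one_mul]
  rw [key, measure_preimage_add]
  rw [e.measurePreserving.measure_preimage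
    ((measurableSet_ball.symmDiff measurableSet_ball).nullMeasurableSet)]
  exact symmDiff_balls_std r d hr hd0.le
end

section
/- Let ω ∈ ℂ \ {0} and σ, τ ∈ ℂ. For the affine function f_a(ζ) = ω + σ(ζ−z) + τ·conj(ζ−z), let c_∞(f_a, r) be any minimizer over c ∈ ℂ of max_{ζ ∈ ∂D_r(z)} |f_a(ζ) − c·conj(ζ−z)|. Then c_∞(f_a, r) → τ + (ω/conj(ω))·conj(σ) as r → 0⁺. -/
open Metric

open Complex in
private lemma key_normSq (r : ℝ) (u a b w : ℂ) :
    Complex.normSq (w + ↑r * (a * u + b * (starRingEnd ℂ) u)) =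
      Complex.normSq w
        + 2 * r * (((starRingEnd ℂ) w * a + w * (starRingEnd ℂ) b) * u).re
        + r ^ 2 * Complex.normSq (a * u + b * (starRingEnd ℂ) u) := by
  simp [Complex.normSq_apply, Complex.mul_re, Complex.mul_im, Complex.add_re, Complex.add_im,
    Complex.conj_re, Complex.conj_im, Complex.ofReal_re, Complex.ofReal_im]
  ring

/-- For the affine function `f_a(ζ) = ω + σ(ζ-z) + τ conj(ζ-z)` with `ω ≠ 0`, any minimizer
`c_∞(f_a,r)` of `max_{ζ ∈ ∂D_r(z)} |f_a(ζ) - c conj(ζ-z)|` converges to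
`τ + (ω/conj ω) conj σ` as `r → 0⁺`. -/
theorem sup_norm_minimizer_limit (z ω σ τ : ℂ) (hω : ω ≠ 0) (c : ℝ → ℂ)
    (hmin : ∀ r > 0, ∀ c' : ℂ,
      sSup ((fun ζ => ‖
          (ω + σ * (ζ - z) + τ * (starRingEnd ℂ) (ζ - z) - c r * (starRingEnd ℂ) (ζ - z))‖)
        '' sphere z r)
      ≤ sSup ((fun ζ => ‖
          (ω + σ * (ζ - z) + τ * (starRingEnd ℂ) (ζ - z) - c' * (starRingEnd ℂ) (ζ - z))‖)
        '' sphere z r)) :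
    Filter.Tendsto c (nhdsWithin 0 (Set.Ioi 0))
      (nhds (τ + ω / (starRingEnd ℂ) ω * (starRingEnd ℂ) σ)) := by
  set L : ℂ := τ + ω / (starRingEnd ℂ) ω * (starRingEnd ℂ) σ with hLdef
  set K : ℝ := ‖σ‖ + ‖τ - L‖ with hKdef
  have hωc : (starRingEnd ℂ) ω ≠ 0 := by simpa using hω
  have hωpos : 0 < ‖ω‖ := norm_pos_iff.mpr hω
  have hKnn : 0 ≤ K := by positivity
  have hWL : (starRingEnd ℂ) ω * σ + ω * (starRingEnd ℂ) (τ - L) = 0 := by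
    rw [hLdef]
    have hsub : τ - (τ + ω / (starRingEnd ℂ) ω * (starRingEnd ℂ) σ)
        = -(ω / (starRingEnd ℂ) ω * (starRingEnd ℂ) σ) := by ring
    rw [hsub, map_neg, map_mul, map_div₀, Complex.conj_conj, Complex.conj_conj]
    field_simp
    ring
  -- main quantitative bound
  have main : ∀ r ∈ Set.Ioi (0:ℝ), dist (c r) L ≤ r * (K ^ 2 / (2 * ‖ω‖)) := by
    intro r hr
    rw [Set.mem_Ioi] at hr
    have hrne : (r : ℂ) ≠ 0 := by exact_mod_cast hr.ne'
    set d : ℝ := ‖c r - L‖ with hd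
    set W : ℂ := (starRingEnd ℂ) ω * σ + ω * (starRingEnd ℂ) (τ - c r) with hWdef
    have hWabs : ‖W‖ = ‖ω‖ * d := by
      rw [hd, ← Complex.norm_conj W]
      rw [norm_sub_rev, ← Complex.norm_conj ω, ← norm_mul]
      congr 1
      rw [hWdef, hLdef]
      simp only [map_add, map_mul, Complex.conj_conj, map_sub]
      field_simp
      ring
    -- choice of the direction u0
    obtain ⟨u0, hu0, hre⟩ : ∃ u0 : ℂ, ‖u0‖ = 1 ∧ (W * u0).re = ‖W‖ := by
      by_cases hWz : W = 0
      · exact ⟨1, by simp, by simp [hWz]⟩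
      · have haW : ‖W‖ ≠ 0 := norm_ne_zero_iff.mpr hWz
        refine ⟨(starRingEnd ℂ) W / (‖W‖ : ℂ), ?_, ?_⟩
        · rw [norm_div, Complex.norm_conj, Complex.norm_real, Real.norm_eq_abs,
            _root_.abs_of_nonneg (norm_nonneg W), div_self haW]
        · rw [mul_div_assoc', Complex.mul_conj, ← Complex.ofReal_div]
          rw [Complex.ofReal_re]
          rw [← Complex.sq_norm, sq]
          field_simp
    -- the point realizing the lower bound
    set ζ0 : ℂ := z + r * u0 with hζ0
    have hζ0mem : ζ0 ∈ sphere z r := by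
      simp [hζ0, Complex.dist_eq, norm_mul, Complex.norm_real, Real.norm_eq_abs, hu0, abs_of_pos hr]
    -- rewriting the expression on the sphere
    have hval : ∀ c' : ℂ, ∀ ζ ∈ sphere z r,
        ω + σ * (ζ - z) + τ * (starRingEnd ℂ) (ζ - z) - c' * (starRingEnd ℂ) (ζ - z)
          = ω + ↑r * (σ * ((ζ - z)/r) + (τ - c') * (starRingEnd ℂ) ((ζ - z)/r)) := by
      intro c' ζ hζ
      have : (starRingEnd ℂ) ((ζ - z)/r) = (starRingEnd ℂ) (ζ - z) / r := by
        rw [map_div₀]; norm_num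
      rw [this]
      field_simp
      ring
    have habs_u : ∀ ζ ∈ sphere z r, ‖(ζ - z)/r‖ = 1 := by
      intro ζ hζ
      rw [mem_sphere, Complex.dist_eq] at hζ
      rw [norm_div, hζ, Complex.norm_real, Real.norm_eq_abs, abs_of_pos hr, div_self hr.ne']
    -- upper bound for every point with c' = L
    have hupper : ∀ x ∈ (fun ζ => ‖ω + σ * (ζ - z) + τ * (starRingEnd ℂ) (ζ - z) - L * (starRingEnd ℂ) (ζ - z)‖)
        '' sphere z r, x ≤ Real.sqrt (Complex.normSq ω + r ^ 2 * K ^ 2) := by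
      rintro x ⟨ζ, hζ, rfl⟩
      set u : ℂ := (ζ - z)/r with hu
      have hu1 : ‖u‖ = 1 := habs_u ζ hζ
      dsimp only
      rw [hval L ζ hζ]
      rw [Real.le_sqrt (norm_nonneg _), Complex.sq_norm]
      rw [key_normSq r u σ (τ - L) ω, hWL]
      have hX : Complex.normSq (σ * u + (τ - L) * (starRingEnd ℂ) u) ≤ K ^ 2 := by
        rw [← Complex.sq_norm]
        have h1 : ‖σ * u + (τ - L) * (starRingEnd ℂ) u‖ ≤ K := by
          calc ‖σ * u + (τ - L) * (starRingEnd ℂ) u‖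
              ≤ ‖σ * u‖ + ‖(τ - L) * (starRingEnd ℂ) u‖ :=
                norm_add_le _ _
            _ = K := by rw [norm_mul, norm_mul, hu1, Complex.norm_conj, hu1, hKdef]; ring
        exact pow_le_pow_left₀ (norm_nonneg _) h1 2
      · simp only [Complex.zero_re, mul_zero, zero_mul, add_zero]
        nlinarith [sq_nonneg r]
      · exact add_nonneg (Complex.normSq_nonneg ω) (by positivity)
    -- lower bound at ζ0
    have hlow : Complex.normSq ω + 2 * r * (‖ω‖ * d) ≤
        (‖ω + σ * (ζ0 - z) + τ * (starRingEnd ℂ) (ζ0 - z)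
          - c r * (starRingEnd ℂ) (ζ0 - z)‖) ^ 2 := by
      rw [hval (c r) ζ0 hζ0mem, Complex.sq_norm]
      have hu0' : (ζ0 - z)/r = u0 := by rw [hζ0]; field_simp; ring
      rw [hu0']
      rw [key_normSq r u0 σ (τ - c r) ω, ← hWdef, hre, hWabs]
      nlinarith [Complex.normSq_nonneg (σ * u0 + (τ - c r) * (starRingEnd ℂ) u0), sq_nonneg r]
    -- bddAbove
    have hbdd : BddAbove ((fun ζ => ‖ω + σ * (ζ - z) + τ * (starRingEnd ℂ) (ζ - z) - c r * (starRingEnd ℂ) (ζ - z)‖)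
        '' sphere z r) := by
      refine ⟨‖ω‖ + r * ‖σ‖ + r * ‖τ - c r‖, ?_⟩
      rintro x ⟨ζ, hζ, rfl⟩
      dsimp only
      rw [hval (c r) ζ hζ]
      have hu1 : ‖(ζ - z)/r‖ = 1 := habs_u ζ hζ
      calc ‖ω + ↑r * (σ * ((ζ - z)/r) + (τ - c r) * (starRingEnd ℂ) ((ζ - z)/r))‖
          ≤ ‖ω‖ + ‖↑r * (σ * ((ζ - z)/r)
              + (τ - c r) * (starRingEnd ℂ) ((ζ - z)/r))‖ := norm_add_le _ _
        _ ≤ ‖ω‖ + ‖(↑r : ℂ)‖ * (‖σ * ((ζ - z)/r)‖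
              + ‖(τ - c r) * (starRingEnd ℂ) ((ζ - z)/r)‖) := by
            rw [norm_mul]
            gcongr
            exact norm_add_le _ _
        _ = ‖ω‖ + r * ‖σ‖ + r * ‖τ - c r‖ := by
            rw [norm_mul, norm_mul, hu1, Complex.norm_conj, hu1, Complex.norm_real, Real.norm_eq_abs,
              abs_of_pos hr]
            ring
    -- chain of inequalities
    have step1 : ‖ω + σ * (ζ0 - z) + τ * (starRingEnd ℂ) (ζ0 - z)
          - c r * (starRingEnd ℂ) (ζ0 - z)‖ ≤ Real.sqrt (Complex.normSq ω + r ^ 2 * K ^ 2) := by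
      calc ‖ω + σ * (ζ0 - z) + τ * (starRingEnd ℂ) (ζ0 - z)
              - c r * (starRingEnd ℂ) (ζ0 - z)‖
          ≤ sSup ((fun ζ => ‖ω + σ * (ζ - z) + τ * (starRingEnd ℂ) (ζ - z) - c r * (starRingEnd ℂ) (ζ - z)‖)
              '' sphere z r) := le_csSup hbdd ⟨ζ0, hζ0mem, rfl⟩
        _ ≤ sSup ((fun ζ => ‖ω + σ * (ζ - z) + τ * (starRingEnd ℂ) (ζ - z) - L * (starRingEnd ℂ) (ζ - z)‖)
              '' sphere z r) := hmin r hr L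
        _ ≤ Real.sqrt (Complex.normSq ω + r ^ 2 * K ^ 2) :=
            csSup_le ⟨_, ⟨ζ0, hζ0mem, rfl⟩⟩ hupper
    have hT : (0:ℝ) ≤ Complex.normSq ω + r ^ 2 * K ^ 2 :=
      add_nonneg (Complex.normSq_nonneg ω) (by positivity)
    have step2 : Complex.normSq ω + 2 * r * (‖ω‖ * d)
        ≤ Complex.normSq ω + r ^ 2 * K ^ 2 := by
      have := pow_le_pow_left₀ (norm_nonneg _) step1 2
      rw [Real.sq_sqrt hT] at this
      exact le_trans hlow this
    have hdle : d ≤ r * (K ^ 2 / (2 * ‖ω‖)) := by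
      rw [mul_div_assoc', le_div_iff₀ (by positivity : (0:ℝ) < 2 * ‖ω‖)]
      nlinarith [step2, hr, hωpos]
    rw [Complex.dist_eq]
    exact hdle
  -- squeeze
  rw [tendsto_iff_dist_tendsto_zero]
  apply squeeze_zero' (Filter.Eventually.of_forall fun t => dist_nonneg)
    ((eventually_mem_nhdsWithin).mono main)
  have : Filter.Tendsto (fun r : ℝ => r * (K ^ 2 / (2 * ‖ω‖)))
      (nhdsWithin 0 (Set.Ioi 0)) (nhds (0 * (K ^ 2 / (2 * ‖ω‖)))) :=
    (Filter.tendsto_id.mul_const _).mono_left nhdsWithin_le_nhds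
  simpa using this
end
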